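/- arXiv:1309.3467 — 2 statements merged into one kernel-verified Lean document; each statement's English description precedes it below -/
import Mathlib

section
/- Let M ≥ 2 and let P : (Fin M) × (Fin M) → Option (Fin M) be a partial Latin square of order M. Suppose the set of symbols appearing in P has cardinality strictly less than M, and every symbol that appears in P appears in exactly M cells. Then there exists a Latin square f : (Fin M) × (Fin M) → Fin M of order M with symbols in Fin M that completes P, i.e., f(a,b) = x whenever P(a,b) = some x. -/
noncomputable section

/-- The equivalence relation on cells `(a,b)` identifying cells with the same
effective constellation point `S a + s * S b`. Its classes are the
singularity removal constraints. -/
def fadeSetoid (M : ℕ) (S : Fin M → ℂ) (s : ℂ) : Setoid (Fin M × Fin M) where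
  r p q := S p.1 + s * S p.2 = S q.1 + s * S q.2
  iseqv := ⟨fun _ => rfl, fun h => h.symm, fun h₁ h₂ => h₁.trans h₂⟩

/-- The singularity removal graph: vertices are the singularity removal
constraints (equivalence classes); two distinct classes are adjacent iff they
contain cells sharing a row or a column. -/
def srg (M : ℕ) (S : Fin M → ℂ) (s : ℂ) :
    SimpleGraph (Quotient (fadeSetoid M S s)) where
  Adj u v := u ≠ v ∧ ∃ p q : Fin M × Fin M,
      Quotient.mk (fadeSetoid M S s) p = u ∧ Quotient.mk (fadeSetoid M S s) q = v ∧
      (p.1 = q.1 ∨ p.2 = q.2)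
  symm := by
    constructor
    rintro u v ⟨hne, p, q, hp, hq, h⟩
    exact ⟨hne.symm, q, p, hq, hp, h.imp Eq.symm Eq.symm⟩
  loopless := by
    constructor
    rintro u ⟨hne, -⟩
    exact hne rfl

/-- A Latin square of order `M` with symbols in `Fin t`. -/
def IsLatinSquare {M t : ℕ} (f : Fin M × Fin M → Fin t) : Prop :=
  (∀ a : Fin M, Function.Injective fun b => f (a, b)) ∧
  (∀ b : Fin M, Function.Injective fun a => f (a, b))

/-- `f` removes the fade state `s`: it is constant on every singularity
removal constraint. -/
def RemovesFadeState (M : ℕ) (S : Fin M → ℂ) (s : ℂ) {t : ℕ}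
    (f : Fin M × Fin M → Fin t) : Prop :=
  ∀ p q : Fin M × Fin M, S p.1 + s * S p.2 = S q.1 + s * S q.2 → f p = f q

/-- The set of singularity removal constraints containing at least two cells. -/
def vitalSet (M : ℕ) (S : Fin M → ℂ) (s : ℂ) : Set (Quotient (fadeSetoid M S s)) :=
  {c | ∃ p q : Fin M × Fin M, p ≠ q ∧
    Quotient.mk (fadeSetoid M S s) p = c ∧ Quotient.mk (fadeSetoid M S s) q = c}

/-- The vital subgraph: the induced subgraph of the singularity removal graph
on the classes of size at least two. -/
def vital (M : ℕ) (S : Fin M → ℂ) (s : ℂ) : SimpleGraph (vitalSet M S s) :=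
  (srg M S s).induce (vitalSet M S s)

/-- The `M`-PSK signal set `S m = exp (i (2m+1) π / M)`. -/
def PSK (M : ℕ) : Fin M → ℂ :=
  fun m => Complex.exp (Complex.I * (2 * (m : ℕ) + 1) * (Real.pi : ℂ) / (M : ℂ))

/-- The square `n²`-QAM signal set: `S (k + l n) = (−n+1+2l) + (−n+1+2k) i`. -/
def QAM (n : ℕ) : Fin (n ^ 2) → ℂ := fun j =>
  (((2 * ((j : ℕ) / n) + 1 : ℤ) - (n : ℤ) : ℤ) : ℂ) +
    (((2 * ((j : ℕ) % n) + 1 : ℤ) - (n : ℤ) : ℤ) : ℂ) * Complex.I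

/-- A partial Latin square of order `M` with symbols in `Fin M`: no symbol
occurs twice in a row or twice in a column. -/
def IsPartialLatinSquare {M : ℕ} (P : Fin M × Fin M → Option (Fin M)) : Prop :=
  (∀ (a b b' : Fin M) (x : Fin M), P (a, b) = some x → P (a, b') = some x → b = b') ∧
  (∀ (a a' b : Fin M) (x : Fin M), P (a, b) = some x → P (a', b) = some x → a = a')

namespace PLSAuxCompletion

open Finset

variable {M : ℕ}

/-- each used symbol appears exactly once in each row -/
lemma row_unique (P : Fin M × Fin M → Option (Fin M)) (hP : IsPartialLatinSquare P)
    (x : Fin M) (hx : (univ.filter fun c : Fin M × Fin M => P c = some x).card = M)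
    (a : Fin M) : (univ.filter fun b => P (a, b) = some x).card = 1 := by
  have key : (univ.filter fun c : Fin M × Fin M => P c = some x).card
      = ∑ a : Fin M, (univ.filter fun b => P (a, b) = some x).card := by
    rw [Finset.card_eq_sum_card_fiberwise (f := Prod.fst) (t := univ)
      (fun c _ => mem_univ _)]
    refine Finset.sum_congr rfl fun a _ => ?_
    apply Finset.card_nbij' Prod.snd (fun b => (a, b))
    · intro c hc
      simp only [mem_filter, mem_univ, true_and, mem_coe] at hc ⊢
      have hce : c = (a, c.2) := by
        obtain ⟨c1, c2⟩ := c; simp only at hc ⊢; rw [hc.2]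
      rw [← hce]; exact hc.1
    · intro b hb
      simp only [mem_filter, mem_univ, true_and, mem_coe] at hb ⊢
      exact ⟨hb, trivial⟩
    · intro c hc
      simp only [mem_filter, mem_univ, true_and, mem_coe] at hc
      obtain ⟨c1, c2⟩ := c; simp only at hc ⊢; rw [hc.2]
    · intro b _; rfl
  have hle : ∀ a : Fin M, (univ.filter fun b => P (a, b) = some x).card ≤ 1 := by
    intro a
    apply Finset.card_le_one.mpr
    intro b hb b' hb'
    simp only [mem_filter, mem_univ, true_and] at hb hb'
    exact hP.1 a b b' x hb hb'
  have key2 : ∑ a : Fin M, (univ.filter fun b => P (a, b) = some x).card = M :=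
    key.symm.trans hx
  by_contra hne
  have hlea := hle a
  have h0 : (univ.filter fun b => P (a, b) = some x).card = 0 := by omega
  have : ∑ a' : Fin M, (univ.filter fun b => P (a', b) = some x).card ≤
      ∑ a' ∈ univ.erase a, 1 := by
    rw [← Finset.add_sum_erase _ _ (mem_univ a), h0, zero_add]
    exact Finset.sum_le_sum fun i _ => hle i
  simp only [Finset.sum_const, smul_eq_mul, mul_one, card_erase_of_mem (mem_univ a),
    card_univ, Fintype.card_fin] at this
  rw [key2] at this
  have hMpos : 0 < M := a.pos
  omega

/-- transposed PLS -/
lemma transpose_pls (P : Fin M × Fin M → Option (Fin M)) (hP : IsPartialLatinSquare P) :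
    IsPartialLatinSquare (fun c : Fin M × Fin M => P (c.2, c.1)) :=
  ⟨fun a b b' x h h' => hP.2 b b' a x h h', fun a a' b x h h' => hP.1 b a a' x h h'⟩

lemma transpose_card (P : Fin M × Fin M → Option (Fin M)) (x : Fin M) :
    (univ.filter fun c : Fin M × Fin M => P (c.2, c.1) = some x).card
      = (univ.filter fun c : Fin M × Fin M => P c = some x).card := by
  apply Finset.card_nbij' Prod.swap Prod.swap
  · intro c hc; simp only [mem_filter, mem_univ, true_and, mem_coe] at hc ⊢; exact hc
  · intro c hc; simp only [mem_filter, mem_univ, true_and, mem_coe] at hc ⊢; exact hc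
  · intro c _; simp
  · intro c _; simp

lemma col_unique (P : Fin M × Fin M → Option (Fin M)) (hP : IsPartialLatinSquare P)
    (x : Fin M) (hx : (univ.filter fun c : Fin M × Fin M => P c = some x).card = M)
    (b : Fin M) : (univ.filter fun a => P (a, b) = some x).card = 1 := by
  have := row_unique (fun c : Fin M × Fin M => P (c.2, c.1)) (transpose_pls P hP) x
    (by rw [transpose_card]; exact hx) b
  simpa using this

/-- number of filled cells in each row equals number of used symbols -/
lemma row_filled (P : Fin M × Fin M → Option (Fin M)) (hP : IsPartialLatinSquare P)
    (happ : ∀ x : Fin M, (∃ c, P c = some x) →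
      (univ.filter fun c : Fin M × Fin M => P c = some x).card = M)
    (a : Fin M) :
    (univ.filter fun b => (P (a, b)).isSome).card
      = (univ.filter fun x : Fin M => ∃ c, P c = some x).card := by
  apply Finset.card_bij (fun b hb => (P (a, b)).get (by
    simp only [mem_filter, mem_univ, true_and] at hb; exact hb))
  · intro b hb
    simp only [mem_filter, mem_univ, true_and]
    exact ⟨(a, b), (Option.some_get _).symm⟩
  · intro b hb b' hb' heq
    simp only [mem_filter, mem_univ, true_and] at hb hb'
    have h1 : P (a, b) = some ((P (a, b)).get hb) := (Option.some_get hb).symm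
    have h2 : P (a, b') = some ((P (a, b')).get hb') := (Option.some_get hb').symm
    rw [heq] at h1
    exact hP.1 a b b' _ h1 h2
  · intro x hx
    simp only [mem_filter, mem_univ, true_and] at hx
    have h1 := row_unique P hP x (happ x hx) a
    have hpos : 0 < (univ.filter fun b => P (a, b) = some x).card := by omega
    obtain ⟨b, hb⟩ := Finset.card_pos.mp hpos
    simp only [mem_filter, mem_univ, true_and] at hb
    have hbs : (P (a, b)).isSome := by rw [hb]; rfl
    refine ⟨b, by simp only [mem_filter, mem_univ, true_and]; exact hbs, ?_⟩
    simp [hb]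

lemma row_empty (P : Fin M × Fin M → Option (Fin M)) (hP : IsPartialLatinSquare P)
    (happ : ∀ x : Fin M, (∃ c, P c = some x) →
      (univ.filter fun c : Fin M × Fin M => P c = some x).card = M)
    (a : Fin M) :
    (univ.filter fun b => P (a, b) = none).card
      = M - (univ.filter fun x : Fin M => ∃ c, P c = some x).card := by
  have h1 := row_filled P hP happ a
  have h2 : (univ.filter fun b => (P (a, b)).isSome).card
      + (univ.filter fun b => ¬ (P (a, b)).isSome).card = M := by
    rw [Finset.card_filter_add_card_filter_not]
    simp
  have h3 : (univ.filter fun b => ¬ (P (a, b)).isSome)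
      = (univ.filter fun b => P (a, b) = none) := by
    apply Finset.filter_congr
    intro b _
    simp [Option.not_isSome_iff_eq_none]
  rw [h3] at h2
  omega

lemma col_empty (P : Fin M × Fin M → Option (Fin M)) (hP : IsPartialLatinSquare P)
    (happ : ∀ x : Fin M, (∃ c, P c = some x) →
      (univ.filter fun c : Fin M × Fin M => P c = some x).card = M)
    (b : Fin M) :
    (univ.filter fun a => P (a, b) = none).card
      = M - (univ.filter fun x : Fin M => ∃ c, P c = some x).card := by
  have := row_empty (fun c : Fin M × Fin M => P (c.2, c.1)) (transpose_pls P hP)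
    (fun x hx => by
      rw [transpose_card]
      apply happ
      obtain ⟨c, hc⟩ := hx
      exact ⟨(c.2, c.1), hc⟩) b
  simp only at this
  rw [this]
  congr 1
  apply Finset.card_nbij' id id <;> intro x hx <;>
    simp only [mem_filter, mem_univ, true_and, id, mem_coe] at hx ⊢ <;>
    first
      | (obtain ⟨c, hc⟩ := hx; exact ⟨(c.2, c.1), hc⟩)
      | rfl

lemma complete_aux (M : ℕ) : ∀ (n : ℕ) (P : Fin M × Fin M → Option (Fin M)),
    IsPartialLatinSquare P →
    (univ.filter fun x : Fin M => ∃ c, P c = some x).card + n = M →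
    (∀ x : Fin M, (∃ c, P c = some x) →
      (univ.filter fun c : Fin M × Fin M => P c = some x).card = M) →
    ∃ f : Fin M × Fin M → Fin M,
      ((∀ a : Fin M, Function.Injective fun b => f (a, b)) ∧
       (∀ b : Fin M, Function.Injective fun a => f (a, b))) ∧
      ∀ (c : Fin M × Fin M) (x : Fin M), P c = some x → f c = x := by
  intro n
  induction n with
  | zero =>
    intro P hP hcard happ
    rw [Nat.add_zero] at hcard
    -- every cell is filled
    have hfill : ∀ c : Fin M × Fin M, (P c).isSome := by
      intro c
      by_contra hc
      rw [Option.not_isSome_iff_eq_none] at hc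
      have he := row_empty P hP happ c.1
      rw [hcard, Nat.sub_self] at he
      have : c.2 ∈ univ.filter fun b => P (c.1, b) = none := by
        simp only [mem_filter, mem_univ, true_and]
        rw [← hc]
      rw [Finset.card_eq_zero.mp he] at this
      exact absurd this (Finset.notMem_empty _)
    refine ⟨fun c => (P c).get (hfill c), ⟨?_, ?_⟩, ?_⟩
    · intro a b b' h
      simp only at h
      have h1 : P (a, b) = some ((P (a, b)).get (hfill _)) := (Option.some_get _).symm
      have h2 : P (a, b') = some ((P (a, b')).get (hfill _)) := (Option.some_get _).symm
      rw [h] at h1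
      exact hP.1 a b b' _ h1 h2
    · intro b a a' h
      simp only at h
      have h1 : P (a, b) = some ((P (a, b)).get (hfill _)) := (Option.some_get _).symm
      have h2 : P (a', b) = some ((P (a', b)).get (hfill _)) := (Option.some_get _).symm
      rw [h] at h1
      exact hP.2 a a' b _ h1 h2
    · intro c x hc
      simp [hc]
  | succ n ih =>
    intro P hP hcard happ
    set k := (univ.filter fun x : Fin M => ∃ c, P c = some x).card with hk
    -- a fresh symbol
    have hkM : k < M := by omega
    have hx₀ : ∃ x₀ : Fin M, ¬ ∃ c, P c = some x₀ := by
      by_contra h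
      push_neg at h
      have : (univ.filter fun x : Fin M => ∃ c, P c = some x) = univ := by
        apply Finset.eq_univ_of_forall
        intro x
        simp only [mem_filter, mem_univ, true_and]
        exact h x
      rw [this, card_univ, Fintype.card_fin] at hk
      omega
    obtain ⟨x₀, hx₀⟩ := hx₀
    -- Hall's theorem on empty cells
    set t : Fin M → Finset (Fin M) := fun a => univ.filter fun b => P (a, b) = none with ht
    have htcard : ∀ a, (t a).card = n + 1 := by
      intro a
      rw [ht]
      rw [row_empty P hP happ a, ← hk]
      omega
    have hcolcard : ∀ b, (univ.filter fun a => P (a, b) = none).card = n + 1 := by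
      intro b
      rw [col_empty P hP happ b, ← hk]
      omega
    have hall : ∀ s : Finset (Fin M), s.card ≤ (s.biUnion t).card := by
      intro s
      have hE1 : ((s ×ˢ (univ : Finset (Fin M))).filter fun c => P c = none).card
          = ∑ a ∈ s, (t a).card := by
        rw [Finset.card_eq_sum_card_fiberwise (f := Prod.fst) (t := s)
          (fun c hc => by
            simp only [mem_filter, Finset.mem_product, mem_coe] at hc ⊢
            exact hc.1.1)]
        refine Finset.sum_congr rfl fun a ha => ?_
        apply Finset.card_nbij' Prod.snd (fun b => (a, b))
        · intro c hc
          simp only [mem_filter, Finset.mem_product, mem_univ, true_and, and_true, mem_coe] at hc ⊢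
          have hce : c = (a, c.2) := by
            obtain ⟨c1, c2⟩ := c; simp only at hc ⊢; rw [hc.2]
          rw [ht]
          simp only [mem_filter, mem_univ, true_and, mem_coe]
          rw [← hce]; exact hc.1.2
        · intro b hb
          rw [ht] at hb
          simp only [mem_filter, mem_univ, true_and, mem_coe] at hb
          simp only [mem_filter, mem_univ, true_and, and_true, Finset.mem_product, mem_coe]
          exact ⟨ha, hb⟩
        · intro c hc
          simp only [mem_filter, Finset.mem_product, mem_coe] at hc
          obtain ⟨c1, c2⟩ := c; simp only at hc ⊢; rw [hc.2]
        · intro b _; rfl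
      have hE2 : ((s ×ˢ (univ : Finset (Fin M))).filter fun c => P c = none).card
          ≤ (n + 1) * (s.biUnion t).card := by
        rw [Finset.card_eq_sum_card_fiberwise (f := Prod.snd) (t := s.biUnion t)
          (fun c hc => by
            simp only [mem_filter, Finset.mem_product, mem_coe] at hc ⊢
            apply Finset.mem_biUnion.mpr
            refine ⟨c.1, hc.1.1, ?_⟩
            rw [ht]
            simp only [mem_filter, mem_univ, true_and]
            exact hc.2)]
        calc ∑ b ∈ s.biUnion t,
              (((s ×ˢ univ).filter fun c => P c = none).filter fun c => c.2 = b).card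
            ≤ ∑ b ∈ s.biUnion t, (n + 1) := by
              apply Finset.sum_le_sum
              intro b _
              rw [← hcolcard b]
              apply Finset.card_le_card_of_injOn Prod.fst
              · intro c hc
                simp only [mem_filter, Finset.mem_product, mem_coe] at hc
                simp only [mem_filter, mem_univ, true_and, mem_coe]
                have : c = (c.1, b) := by
                  obtain ⟨c1, c2⟩ := c; simp only at hc ⊢; rw [hc.2]
                rw [this] at hc ⊢
                exact hc.1.2
              · intro c hc c' hc' heq
                simp only [Finset.coe_filter, Set.mem_setOf_eq, Finset.mem_product] at hc hc'
                obtain ⟨c1, c2⟩ := c; obtain ⟨c1', c2'⟩ := c'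
                simp only at heq hc hc' ⊢
                rw [heq, hc.2, hc'.2]
          _ = (n + 1) * (s.biUnion t).card := by
              rw [Finset.sum_const, smul_eq_mul, mul_comm]
      have hsum : ∑ a ∈ s, (t a).card = (n + 1) * s.card := by
        rw [Finset.sum_congr rfl fun a _ => htcard a, Finset.sum_const, smul_eq_mul,
          mul_comm]
      rw [hE1, hsum] at hE2
      exact Nat.le_of_mul_le_mul_left hE2 (Nat.succ_pos n)
    obtain ⟨g, hginj, hgmem⟩ := (Finset.all_card_le_biUnion_card_iff_exists_injective t).mp hall
    have hgnone : ∀ a, P (a, g a) = none := by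
      intro a
      have := hgmem a
      rw [ht] at this
      simp only [mem_filter, mem_univ, true_and] at this
      exact this
    -- extended partial latin square
    set P' : Fin M × Fin M → Option (Fin M) :=
      fun c => if c.2 = g c.1 then some x₀ else P c with hP'def
    have hP'x₀ : ∀ c : Fin M × Fin M, P' c = some x₀ ↔ c.2 = g c.1 := by
      intro c
      simp only [hP'def]
      constructor
      · intro h
        by_contra hc
        rw [if_neg hc] at h
        exact hx₀ ⟨c, h⟩
      · intro h
        rw [if_pos h]
    have hP'ne : ∀ (c : Fin M × Fin M) (x : Fin M), x ≠ x₀ → (P' c = some x ↔ P c = some x) := by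
      intro c x hx
      simp only [hP'def]
      by_cases h : c.2 = g c.1
      · rw [if_pos h]
        constructor
        · intro he; exact absurd (Option.some_injective _ he).symm hx
        · intro he
          have : P c = none := by
            have := hgnone c.1
            rw [← h] at this
            exact this
          rw [this] at he; exact absurd he (by simp)
      · rw [if_neg h]
    have hP' : IsPartialLatinSquare P' := by
      constructor
      · intro a b b' x h h'
        by_cases hx : x = x₀
        · subst hx
          have h1 := (hP'x₀ (a, b)).mp h
          have h2 := (hP'x₀ (a, b')).mp h'
          simp only at h1 h2
          rw [h1, h2]
        · exact hP.1 a b b' x ((hP'ne (a, b) x hx).mp h) ((hP'ne (a, b') x hx).mp h')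
      · intro a a' b x h h'
        by_cases hx : x = x₀
        · subst hx
          have h1 := (hP'x₀ (a, b)).mp h
          have h2 := (hP'x₀ (a', b)).mp h'
          simp only at h1 h2
          exact hginj (h1.symm.trans h2)
        · exact hP.2 a a' b x ((hP'ne (a, b) x hx).mp h) ((hP'ne (a', b) x hx).mp h')
    have hused' : (univ.filter fun x : Fin M => ∃ c, P' c = some x)
        = insert x₀ (univ.filter fun x : Fin M => ∃ c, P c = some x) := by
      ext x
      simp only [mem_filter, mem_univ, true_and, Finset.mem_insert]
      by_cases hx : x = x₀
      · subst hx
        simp only [true_or, iff_true]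
        have hMpos : 0 < M := x.pos
        exact ⟨(⟨0, hMpos⟩, g ⟨0, hMpos⟩), (hP'x₀ _).mpr rfl⟩
      · simp only [hx, false_or]
        constructor
        · rintro ⟨c, hc⟩; exact ⟨c, (hP'ne c x hx).mp hc⟩
        · rintro ⟨c, hc⟩; exact ⟨c, (hP'ne c x hx).mpr hc⟩
    have hcard' : (univ.filter fun x : Fin M => ∃ c, P' c = some x).card + n = M := by
      rw [hused', Finset.card_insert_of_notMem (by
        simp only [mem_filter, mem_univ, true_and]; exact hx₀), ← hk]
      omega
    have happ' : ∀ x : Fin M, (∃ c, P' c = some x) →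
        (univ.filter fun c : Fin M × Fin M => P' c = some x).card = M := by
      intro x hx
      by_cases hxx : x = x₀
      · subst hxx
        have : (univ.filter fun c : Fin M × Fin M => P' c = some x)
            = univ.filter fun c : Fin M × Fin M => c.2 = g c.1 := by
          ext c
          simp only [mem_filter, mem_univ, true_and]
          exact hP'x₀ c
        rw [this]
        have hbij : (univ.filter fun c : Fin M × Fin M => c.2 = g c.1).card
            = (univ : Finset (Fin M)).card := by
          apply Finset.card_nbij' Prod.fst (fun a => (a, g a))
          · intro c _; exact mem_univ _
          · intro a _
            simp only [mem_filter, mem_univ, true_and, mem_coe]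
          · intro c hc
            simp only [mem_filter, mem_univ, true_and, mem_coe] at hc
            obtain ⟨c1, c2⟩ := c
            simp only at hc ⊢
            rw [hc]
          · intro a _; rfl
        rw [hbij, card_univ, Fintype.card_fin]
      · have heq : (univ.filter fun c : Fin M × Fin M => P' c = some x)
            = univ.filter fun c : Fin M × Fin M => P c = some x := by
          ext c
          simp only [mem_filter, mem_univ, true_and]
          exact hP'ne c x hxx
        rw [heq]
        apply happ
        obtain ⟨c, hc⟩ := hx
        exact ⟨c, (hP'ne c x hxx).mp hc⟩
    obtain ⟨f, hlat, hcomp⟩ := ih P' hP' hcard' happ'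
    refine ⟨f, hlat, fun c x hc => ?_⟩
    apply hcomp
    simp only [hP'def]
    have hne : ¬ c.2 = g c.1 := by
      intro h
      have := hgnone c.1
      rw [← h] at this
      obtain ⟨c1, c2⟩ := c
      simp only at h this hc
      rw [this] at hc
      exact absurd hc (by simp)
    rw [if_neg hne]
    exact hc


end PLSAuxCompletion

/-- a partial Latin square of order `M` using fewer than `M`
symbols, in which every appearing symbol appears in exactly `M` cells, can be
completed to a Latin square of order `M` with symbols in `Fin M`. -/
theorem partialLatinSquare_completable (M : ℕ) (hM : 2 ≤ M)
    (P : Fin M × Fin M → Option (Fin M)) (hP : IsPartialLatinSquare P)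
    (hcard : (Finset.univ.filter fun x : Fin M => ∃ c, P c = some x).card < M)
    (happ : ∀ x : Fin M, (∃ c, P c = some x) →
      (Finset.univ.filter fun c : Fin M × Fin M => P c = some x).card = M) :
    ∃ f : Fin M × Fin M → Fin M, IsLatinSquare f ∧
      ∀ (c : Fin M × Fin M) (x : Fin M), P c = some x → f c = x := by
  have hk : (Finset.univ.filter fun x : Fin M => ∃ c, P c = some x).card
      + (M - (Finset.univ.filter fun x : Fin M => ∃ c, P c = some x).card) = M := by
    omega
  obtain ⟨f, hlat, hcomp⟩ := PLSAuxCompletion.complete_aux M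
    (M - (Finset.univ.filter fun x : Fin M => ∃ c, P c = some x).card) P hP hk happ
  exact ⟨f, hlat, hcomp⟩
end
end

section
/- Let S : Fin 4 → ℂ be the 4-QAM signal set given by S(0) = −1−i, S(1) = −1+i, S(2) = 1−i, S(3) = 1+i, and let s = (1+i)/2. Then the chromatic number of the singularity removal graph G_s equals 5. -/
noncomputable section

/-- The 4-QAM signal set. -/
def qam4 : Fin 4 → ℂ := ![-1 - Complex.I, -1 + Complex.I, 1 - Complex.I, 1 + Complex.I]


namespace Qam4Aux

/-- Integer key `(re, im)` of the effective point `qam4 a + ((1+i)/2) * qam4 b`. -/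
def key : Fin 4 × Fin 4 → ℤ × ℤ := fun p =>
  ![![(-1,-2),(-2,-1),(0,-1),(-1,0)],
    ![(-1,0),(-2,1),(0,1),(-1,2)],
    ![(1,-2),(0,-1),(2,-1),(1,0)],
    ![(1,0),(0,1),(2,1),(1,2)]] p.1 p.2

/-- Explicit 5-coloring of the cells. -/
def col : Fin 4 × Fin 4 → Fin 5 := fun p =>
  ![![0,1,2,3],
    ![3,0,4,2],
    ![4,2,0,1],
    ![1,4,3,0]] p.1 p.2

lemma key_spec (p : Fin 4 × Fin 4) :
    qam4 p.1 + ((1 + Complex.I) / 2) * qam4 p.2 =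
      ((key p).1 : ℂ) + ((key p).2 : ℂ) * Complex.I := by
  obtain ⟨a, b⟩ := p
  have h2 : (2 : ℂ) ≠ 0 := two_ne_zero
  fin_cases a <;> fin_cases b <;>
    · show qam4 _ + _ * qam4 _ = _
      rw [show key _ = _ from rfl]
      simp only [qam4, Matrix.cons_val_zero, Matrix.cons_val_one, Matrix.head_cons,
        Matrix.cons_val_fin_one, Matrix.cons_val_succ]
      push_cast
      field_simp
      ring_nf
      simp [Complex.ext_iff, Complex.I_sq]
      norm_num [key, Matrix.cons_val_two, Matrix.cons_val_three, Matrix.tail_cons, Matrix.cons_val_zero, Matrix.cons_val_one, Matrix.head_cons,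
        Matrix.cons_val_fin_one, Matrix.cons_val_succ]

lemma key_eq_of_val_eq {p q : Fin 4 × Fin 4}
    (h : qam4 p.1 + ((1 + Complex.I) / 2) * qam4 p.2 =
         qam4 q.1 + ((1 + Complex.I) / 2) * qam4 q.2) : key p = key q := by
  rw [key_spec p, key_spec q] at h
  have h1 := congrArg Complex.re h
  have h2 := congrArg Complex.im h
  simp at h1 h2
  exact Prod.ext (by exact_mod_cast h1) (by exact_mod_cast h2)

lemma col_const {p q : Fin 4 × Fin 4} (h : key p = key q) : col p = col q := by
  revert h; revert p q; decide

lemma col_inj {p q : Fin 4 × Fin 4} (h : p.1 = q.1 ∨ p.2 = q.2)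
    (hc : col p = col q) : p = q := by
  revert hc; revert h; revert p q; decide

end Qam4Aux

open Qam4Aux in

/-- for 4-QAM and the singular fade state `s = (1+i)/2`, the
chromatic number of the singularity removal graph equals 5. -/
theorem qam4_chromaticNumber_eq_five :
    (srg 4 qam4 ((1 + Complex.I) / 2)).chromaticNumber = ((5 : ℕ) : ℕ∞) := by
  set s₀ : ℂ := (1 + Complex.I) / 2 with hs
  have hval : ∀ p q : Fin 4 × Fin 4, key p = key q →
      qam4 p.1 + s₀ * qam4 p.2 = qam4 q.1 + s₀ * qam4 q.2 := by
    intro p q hk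
    rw [key_spec p, key_spec q, hk]
  have hmk : ∀ p q : Fin 4 × Fin 4, key p = key q →
      Quotient.mk (fadeSetoid 4 qam4 s₀) p = Quotient.mk (fadeSetoid 4 qam4 s₀) q :=
    fun p q hk => Quotient.sound (hval p q hk)
  have hmkne : ∀ p q : Fin 4 × Fin 4, key p ≠ key q →
      Quotient.mk (fadeSetoid 4 qam4 s₀) p ≠ Quotient.mk (fadeSetoid 4 qam4 s₀) q :=
    fun p q hk h => hk (key_eq_of_val_eq (Quotient.exact h))
  -- upper bound: explicit 5-coloring
  have hcol : (srg 4 qam4 s₀).Colorable 5 := by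
    refine ⟨⟨Quotient.lift col fun p q h => col_const (key_eq_of_val_eq h), ?_⟩⟩
    rintro u v ⟨hne, p, q, hp, hq, hpq⟩
    subst hp; subst hq
    simp only [Quotient.lift_mk]
    intro hcpq
    exact hne (congrArg _ (col_inj hpq hcpq))
  -- lower bound: a 5-clique
  letI : DecidableEq (Quotient (fadeSetoid 4 qam4 s₀)) := Classical.decEq _
  set v0 := Quotient.mk (fadeSetoid 4 qam4 s₀) (0,0) with hv0
  set v1 := Quotient.mk (fadeSetoid 4 qam4 s₀) (0,2) with hv1
  set v2 := Quotient.mk (fadeSetoid 4 qam4 s₀) (0,3) with hv2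
  set v3 := Quotient.mk (fadeSetoid 4 qam4 s₀) (2,0) with hv3
  set v4 := Quotient.mk (fadeSetoid 4 qam4 s₀) (2,3) with hv4
  have e1 : Quotient.mk (fadeSetoid 4 qam4 s₀) (2,1) = v1 := hmk _ _ (by decide)
  have e2 : Quotient.mk (fadeSetoid 4 qam4 s₀) (1,0) = v2 := hmk _ _ (by decide)
  have e3 : Quotient.mk (fadeSetoid 4 qam4 s₀) (3,0) = v4 := hmk _ _ (by decide)
  have n01 : v0 ≠ v1 := hmkne _ _ (by decide)
  have n02 : v0 ≠ v2 := hmkne _ _ (by decide)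
  have n03 : v0 ≠ v3 := hmkne _ _ (by decide)
  have n04 : v0 ≠ v4 := hmkne _ _ (by decide)
  have n12 : v1 ≠ v2 := hmkne _ _ (by decide)
  have n13 : v1 ≠ v3 := hmkne _ _ (by decide)
  have n14 : v1 ≠ v4 := hmkne _ _ (by decide)
  have n23 : v2 ≠ v3 := hmkne _ _ (by decide)
  have n24 : v2 ≠ v4 := hmkne _ _ (by decide)
  have n34 : v3 ≠ v4 := hmkne _ _ (by decide)
  have hclique : (srg 4 qam4 s₀).IsClique (({v0, v1, v2, v3, v4} : Finset _) : Set _) := by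
    intro u hu v hv huv
    simp only [Finset.coe_insert, Set.mem_insert_iff, Finset.coe_singleton,
      Set.mem_singleton_iff] at hu hv
    refine ⟨huv, ?_⟩
    rcases hu with rfl|rfl|rfl|rfl|rfl <;> rcases hv with rfl|rfl|rfl|rfl|rfl <;>
      first
      | exact absurd rfl huv
      | exact ⟨(0,0), (0,2), rfl, rfl, Or.inl rfl⟩
      | exact ⟨(0,2), (0,0), rfl, rfl, Or.inl rfl⟩
      | exact ⟨(0,0), (0,3), rfl, rfl, Or.inl rfl⟩
      | exact ⟨(0,3), (0,0), rfl, rfl, Or.inl rfl⟩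
      | exact ⟨(0,0), (2,0), rfl, rfl, Or.inr rfl⟩
      | exact ⟨(2,0), (0,0), rfl, rfl, Or.inr rfl⟩
      | exact ⟨(0,0), (3,0), rfl, e3, Or.inr rfl⟩
      | exact ⟨(3,0), (0,0), e3, rfl, Or.inr rfl⟩
      | exact ⟨(0,2), (0,3), rfl, rfl, Or.inl rfl⟩
      | exact ⟨(0,3), (0,2), rfl, rfl, Or.inl rfl⟩
      | exact ⟨(2,1), (2,0), e1, rfl, Or.inl rfl⟩
      | exact ⟨(2,0), (2,1), rfl, e1, Or.inl rfl⟩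
      | exact ⟨(2,1), (2,3), e1, rfl, Or.inl rfl⟩
      | exact ⟨(2,3), (2,1), rfl, e1, Or.inl rfl⟩
      | exact ⟨(1,0), (2,0), e2, rfl, Or.inr rfl⟩
      | exact ⟨(2,0), (1,0), rfl, e2, Or.inr rfl⟩
      | exact ⟨(0,3), (2,3), rfl, rfl, Or.inr rfl⟩
      | exact ⟨(2,3), (0,3), rfl, rfl, Or.inr rfl⟩
      | exact ⟨(2,0), (2,3), rfl, rfl, Or.inl rfl⟩
      | exact ⟨(2,3), (2,0), rfl, rfl, Or.inl rfl⟩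
  have hcard : ({v0, v1, v2, v3, v4} : Finset _).card = 5 := by
    rw [Finset.card_insert_of_notMem (by simp [n01, n02, n03, n04]),
      Finset.card_insert_of_notMem (by simp [n12, n13, n14]),
      Finset.card_insert_of_notMem (by simp [n23, n24]),
      Finset.card_insert_of_notMem (by simp [n34]), Finset.card_singleton]
  have hlow := hclique.card_le_chromaticNumber
  rw [hcard] at hlow
  exact le_antisymm hcol.chromaticNumber_le hlow
end
end
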